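/- Let G be a group in which the conjugation quandle is quasi-trivial, i.e., g commutes with k⁻¹ g k for all g, k ∈ G. Then for the rack h ▷ g = g⁻¹ h g · χ(h,g) built from any admissible χ, the idempotent quandle Q(G) = {g : χ(g,g) = 1} is quasi-trivial: g ▷ (g ▷ k) = g for all g, k ∈ Q(G). -/

import Mathlib

/-- If the conjugation quandle of `G` is quasi-trivial (every `g` commutes with `k⁻¹ g k`),
then the idempotent quandle `Q(G) = {g : χ(g,g) = 1}` of the rack
`h ▷ g = g⁻¹ h g · χ(h,g)` is quasi-trivial. -/
theorem quasi_trivial_of_conj_quasi_trivial {G A : Type*} [Group G] [AddCommGroup A]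
    (κ : G → A) (hκ : ∀ g h : G, κ (g * h) = κ g + κ h)
    (β : A → A → G)
    (hcenter : ∀ a b : A, ∀ g : G, β a b * g = g * β a b)
    (hsymm : ∀ a b : A, β a b = β b a)
    (hadd : ∀ a a' b : A, β (a + a') b = β a b * β a' b)
    (hker : ∀ a b : A, κ (β a b) = 0)
    (hconj : ∀ g k : G, g * (k⁻¹ * g * k) = (k⁻¹ * g * k) * g) :
    let χ : G → G → G := fun h g => β (κ h) (κ g)
    let op : G → G → G := fun h g => g⁻¹ * h * g * χ h g
    ∀ g k : G, χ g g = 1 → χ k k = 1 → op g (op g k) = g := by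
  intro χ op g k hg hk
  have h1 : κ (1 : G) = 0 := by
    have := hκ 1 1; rw [mul_one] at this
    exact (right_eq_add.mp this)
  have hinv : ∀ x : G, κ x⁻¹ = - κ x := by
    intro x
    have := hκ x x⁻¹
    rw [mul_inv_cancel, h1] at this
    exact (neg_eq_of_add_eq_zero_right this.symm).symm
  have hm : κ (op g k) = κ g := by
    simp only [op, χ, hκ, hinv, hker]
    abel
  have hχ : χ g (op g k) = 1 := by
    simp only [χ, hm]; exact hg
  show (op g k)⁻¹ * g * (op g k) * χ g (op g k) = g
  rw [hχ, mul_one]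
  set z := β (κ g) (κ k) with hz
  have hopgk : op g k = k⁻¹ * g * k * z := rfl
  rw [hopgk]
  have hc := hconj g k
  have hcz := hcenter (κ g) (κ k)
  simp only [mul_inv_rev]
  calc z⁻¹ * (k⁻¹ * (g⁻¹ * k⁻¹⁻¹)) * g * (k⁻¹ * g * k * z)
      = z⁻¹ * ((k⁻¹ * g * k)⁻¹ * (g * (k⁻¹ * g * k))) * z := by
        group
    _ = z⁻¹ * ((k⁻¹ * g * k)⁻¹ * ((k⁻¹ * g * k) * g)) * z := by rw [hc]
    _ = z⁻¹ * g * z := by group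
    _ = z⁻¹ * z * g := by rw [mul_assoc, ← hcz g, ← mul_assoc]
    _ = g := by group
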